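/- arXiv:2009.10587 — 2 statements merged into one kernel-verified Lean document; each statement's English description precedes it below -/
import Mathlib

section
/- Let R be a commutative ring, let s be a ring automorphism of R with s ∘ s = id, let R^s := { r ∈ R : s(r) = r } be the fixed subring, and suppose δ ∈ R is such that (1, δ) is a basis of R as a module over R^s. Let B := R ⊗_{R^s} R, with (R,R)-bimodule structure r · (a ⊗ b) · r' = (r a) ⊗ (b r'). Then: the multiplication map m : B → R, a ⊗ b ↦ ab, is surjective; setting c := δ ⊗ 1 − 1 ⊗ δ, one has r · c = c · s(r) for every r ∈ R; and the kernel of m is exactly { r · c : r ∈ R }, with r ↦ r · c injective. Consequently there is a short exact sequence of (R,R)-bimodules 0 → Δ_s → B → Δ_e → 0, where Δ_s denotes R with the bimodule structure r · m · r' = r m s(r') and Δ_e denotes R with the standard bimodule structure. -/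
open TensorProduct

/-- The subring of fixed points of a ring automorphism. -/
def fixedSubring {R : Type*} [CommRing R] (s : R ≃+* R) : Subring R :=
  RingHom.eqLocus (s : R →+* R) (RingHom.id R)

/-- Left outer multiplication `u ↦ r · u` on `R ⊗_S R`, for `S` a subring of `R`. -/
noncomputable def actLeft {R : Type*} [CommRing R] (S : Subring R) (r : R) :
    R ⊗[S] R →ₗ[S] R ⊗[S] R :=
  LinearMap.rTensor R (LinearMap.mulLeft S r)

/-- Right outer multiplication `u ↦ u · r'` on `R ⊗_S R`, for `S` a subring of `R`. -/
noncomputable def actRight {R : Type*} [CommRing R] (S : Subring R) (r' : R) :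
    R ⊗[S] R →ₗ[S] R ⊗[S] R :=
  LinearMap.lTensor R (LinearMap.mulRight S r')

set_option maxHeartbeats 1000000 in
/-- Lemma 2.4 of Bezrukavnikov–Riche, "Hecke action on the principal block", first exact
sequence (`Δ_s ↪ R ⊗_{R^s} R ↠ Δ_e`): if `s` is a ring involution of `R` and `(1, δ)` is a
basis of `R` over the fixed subring `R^s`, then the multiplication map
`m : R ⊗_{R^s} R → R` is surjective; the element `c = δ ⊗ 1 - 1 ⊗ δ` satisfies
`r · c = c · s(r)`; and the kernel of `m` is exactly `{r · c : r ∈ R}`, with `r ↦ r · c`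
injective. -/
theorem stmt_6 {R : Type*} [CommRing R] (s : R ≃+* R) (hinv : ∀ r : R, s (s r) = r)
    (δ : R)
    (hbasis : ∀ r : R, ∃! p : (fixedSubring s) × (fixedSubring s),
      r = (p.1 : R) + (p.2 : R) * δ) :
    Function.Surjective (LinearMap.mul' (fixedSubring s) R) ∧
    (∀ r : R,
      actLeft (fixedSubring s) r
          (δ ⊗ₜ[fixedSubring s] (1 : R) - (1 : R) ⊗ₜ[fixedSubring s] δ) =
        actRight (fixedSubring s) (s r)
          (δ ⊗ₜ[fixedSubring s] (1 : R) - (1 : R) ⊗ₜ[fixedSubring s] δ)) ∧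
    (∀ u : R ⊗[fixedSubring s] R,
      LinearMap.mul' (fixedSubring s) R u = 0 ↔
        ∃ r : R, u = actLeft (fixedSubring s) r
          (δ ⊗ₜ[fixedSubring s] (1 : R) - (1 : R) ⊗ₜ[fixedSubring s] δ)) ∧
    Function.Injective (fun r : R =>
      actLeft (fixedSubring s) r
        (δ ⊗ₜ[fixedSubring s] (1 : R) - (1 : R) ⊗ₜ[fixedSubring s] δ)) := by
  set S := fixedSubring s with hSdef
  set c : R ⊗[S] R := δ ⊗ₜ[S] (1 : R) - (1 : R) ⊗ₜ[S] δ with hc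
  -- basic scalar lemmas
  have hcoe : ∀ (a : S) (x : R), a • x = (a : R) * x := fun a x => rfl
  have hl : ∀ (a : S) (x y : R), ((a : R) * x) ⊗ₜ[S] y = a • (x ⊗ₜ[S] y) := by
    intro a x y; rw [← hcoe, smul_tmul']
  have hr' : ∀ (a : S) (x y : R), x ⊗ₜ[S] ((a : R) * y) = a • (x ⊗ₜ[S] y) := by
    intro a x y; rw [← hcoe, tmul_smul]
  have hl1 : ∀ (a : S) (y : R), ((a : R)) ⊗ₜ[S] y = a • ((1 : R) ⊗ₜ[S] y) := by
    intro a y; rw [← hl a 1 y, mul_one]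
  have hr1 : ∀ (a : S) (x : R), x ⊗ₜ[S] ((a : R)) = a • (x ⊗ₜ[S] (1 : R)) := by
    intro a x; rw [← hr' a x 1, mul_one]
  -- coordinates
  choose p hp hu using hbasis
  replace hp : ∀ r : R, r = ((p r).1 : R) + ((p r).2 : R) * δ := hp
  replace hu : ∀ (r : R) (q : S × S), r = (q.1 : R) + (q.2 : R) * δ → q = p r := hu
  have hpδ : p δ = (0, 1) := (hu δ (0, 1) (by push_cast; ring)).symm
  have hp1 : p 1 = (1, 0) := (hu 1 (1, 0) (by push_cast; ring)).symm
  -- the coordinate functional r ↦ (p r).2 is S-linear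
  have hpadd : ∀ r₁ r₂ : R, p (r₁ + r₂) = p r₁ + p r₂ := by
    intro r₁ r₂
    refine (hu (r₁ + r₂) (p r₁ + p r₂) ?_).symm
    rw [Prod.fst_add, Prod.snd_add]
    push_cast
    conv_lhs => rw [hp r₁, hp r₂]
    ring
  have hpsmul : ∀ (a : S) (r : R), p (a • r) = (a * (p r).1, a * (p r).2) := by
    intro a r
    refine (hu (a • r) (a * (p r).1, a * (p r).2) ?_).symm
    rw [hcoe]
    push_cast
    conv_lhs => rw [hp r]
    ring
  let π : R →ₗ[S] S :=
    { toFun := fun r => (p r).2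
      map_add' := fun r₁ r₂ => by
        show (p (r₁ + r₂)).2 = (p r₁).2 + (p r₂).2
        rw [hpadd, Prod.snd_add]
      map_smul' := fun a r => by
        show (p (a • r)).2 = a • (p r).2
        rw [hpsmul, smul_eq_mul]
    }
  have hπ : ∀ r : R, π r = (p r).2 := fun r => rfl
  let φ : R ⊗[S] R →ₗ[S] R :=
    (TensorProduct.rid S R).toLinearMap.comp (LinearMap.lTensor R π)
  have hφ : ∀ x y : R, φ (x ⊗ₜ[S] y) = (p y).2 • x := by
    intro x y
    simp [φ, hπ]
  -- actLeft/actRight on pure tensors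
  have hact_tmul : ∀ (r x y : R), actLeft S r (x ⊗ₜ[S] y) = (r * x) ⊗ₜ[S] y := by
    intro r x y; simp [actLeft]
  have hactR_tmul : ∀ (r x y : R), actRight S r (x ⊗ₜ[S] y) = x ⊗ₜ[S] (y * r) := by
    intro r x y; simp [actRight]
  have hact_c : ∀ r : R, actLeft S r c = (r * δ) ⊗ₜ[S] (1 : R) - r ⊗ₜ[S] δ := by
    intro r
    rw [hc, map_sub, hact_tmul, hact_tmul, mul_one]
  have hact_add : ∀ (r₁ r₂ : R) (u : R ⊗[S] R),
      actLeft S (r₁ + r₂) u = actLeft S r₁ u + actLeft S r₂ u := by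
    intro r₁ r₂ u
    have h : LinearMap.mulLeft S (r₁ + r₂) =
        LinearMap.mulLeft S r₁ + LinearMap.mulLeft S r₂ :=
      LinearMap.ext fun x => add_mul _ _ _
    rw [actLeft, h, LinearMap.rTensor_add]; rfl
  have hact_zero : ∀ u : R ⊗[S] R, actLeft S 0 u = 0 := by
    intro u
    have h : LinearMap.mulLeft S (0 : R) = 0 := LinearMap.ext fun x => zero_mul _
    rw [actLeft, h, LinearMap.rTensor_zero]; rfl
  -- multiplication interacts with actLeft
  have hm_act : ∀ (r : R) (u : R ⊗[S] R),
      LinearMap.mul' S R (actLeft S r u) = r * LinearMap.mul' S R u := by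
    intro r u
    induction u with
    | zero => simp
    | tmul x y => rw [hact_tmul, LinearMap.mul'_apply, LinearMap.mul'_apply, mul_assoc]
    | add u v hu' hv' => rw [map_add, map_add, map_add, hu', hv', mul_add]
  -- the key identity: u = (-φ u) · c + (m u) ⊗ 1
  have key : ∀ u : R ⊗[S] R,
      u = actLeft S (-(φ u)) c + (LinearMap.mul' S R u) ⊗ₜ[S] (1 : R) := by
    intro u
    induction u with
    | zero => rw [map_zero, neg_zero, hact_zero, map_zero, zero_tmul, add_zero]
    | tmul x y =>
        rw [hφ, LinearMap.mul'_apply, hact_c]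
        have e1 : ((-((p y).2 • x)) * δ) ⊗ₜ[S] (1 : R) =
            (-(p y).2) • ((x * δ) ⊗ₜ[S] (1 : R)) := by
          rw [show (-((p y).2 • x)) * δ = ((-(p y).2 : S) : R) * (x * δ) from by
            rw [hcoe]; push_cast; ring, hl]
        have e2 : (-((p y).2 • x)) ⊗ₜ[S] δ = (-(p y).2) • (x ⊗ₜ[S] δ) := by
          rw [show -((p y).2 • x) = ((-(p y).2 : S) : R) * x from by
            rw [hcoe]; push_cast; ring, hl]
        have e3 : (x * y) ⊗ₜ[S] (1 : R) =
            (p y).1 • (x ⊗ₜ[S] (1 : R)) + (p y).2 • ((x * δ) ⊗ₜ[S] (1 : R)) := by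
          conv_lhs => rw [hp y]
          rw [show x * (((p y).1 : R) + ((p y).2 : R) * δ) =
            ((p y).1 : R) * x + ((p y).2 : R) * (x * δ) from by ring, add_tmul, hl, hl]
        have e4 : x ⊗ₜ[S] y = (p y).1 • (x ⊗ₜ[S] (1 : R)) + (p y).2 • (x ⊗ₜ[S] δ) := by
          conv_lhs => rw [hp y]
          rw [tmul_add, hr1, hr']
        rw [e1, e2, e3, e4]
        module
    | add u v hu' hv' =>
        rw [map_add, map_add, neg_add, hact_add, add_tmul]
        conv_lhs => rw [hu', hv']
        abel
  refine ⟨?_, ?_, ?_, ?_⟩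
  · -- surjectivity
    intro r
    exact ⟨r ⊗ₜ[S] 1, by rw [LinearMap.mul'_apply, mul_one]⟩
  · -- r · c = c · s r
    intro r
    set a := (p r).1 with ha
    set b := (p r).2 with hb
    have hfix : ∀ q : S, s (q : R) = (q : R) := fun q => q.2
    have httm : δ + s δ ∈ S := by
      show s (δ + s δ) = δ + s δ
      rw [map_add, hinv]; ring
    have hnnm : δ * s δ ∈ S := by
      show s (δ * s δ) = δ * s δ
      rw [map_mul, hinv]; ring
    set tt : S := ⟨δ + s δ, httm⟩ with htt
    set nn : S := ⟨δ * s δ, hnnm⟩ with hnn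
    have httc : (tt : R) = δ + s δ := rfl
    have hnnc : (nn : R) = δ * s δ := rfl
    have hsr : s r = ((a + b * tt : S) : R) + ((-b : S) : R) * δ := by
      conv_lhs => rw [hp r, ← ha, ← hb]
      rw [map_add, map_mul, hfix a, hfix b]
      push_cast [httc]
      ring
    have hrδ : r * δ = ((-(b * nn) : S) : R) + ((a + b * tt : S) : R) * δ := by
      conv_lhs => rw [hp r, ← ha, ← hb]
      push_cast [httc, hnnc]
      ring
    have hδsr : δ * s r = ((b * nn : S) : R) + ((a : S) : R) * δ := by
      rw [hsr]
      push_cast [httc, hnnc]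
      ring
    rw [hact_c, hc, map_sub, hactR_tmul, hactR_tmul, one_mul, hrδ, hδsr, hsr]
    conv_lhs => rw [hp r, ← ha, ← hb]
    rw [add_tmul, hl1, hl, add_tmul, hl1, hl, tmul_add, hr1, hr', tmul_add, hr1, hr']
    module
  · -- kernel characterization
    intro u
    constructor
    · intro hu0
      refine ⟨-(φ u), ?_⟩
      conv_lhs => rw [key u]
      rw [hu0, zero_tmul, add_zero]
    · rintro ⟨r, rfl⟩
      rw [hm_act]
      have : LinearMap.mul' S R c = 0 := by
        rw [hc, map_sub, LinearMap.mul'_apply, LinearMap.mul'_apply]; ring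
      rw [this, mul_zero]
  · -- injectivity
    have hφc : ∀ r : R, φ (actLeft S r c) = -r := by
      intro r
      rw [hact_c, map_sub, hφ, hφ, hp1, hpδ]
      simp
    intro r₁ r₂ h
    have h2 := congrArg φ h
    simp only [hφc] at h2
    exact neg_injective h2
end

section
/- Let R be a commutative ring, let s be a ring automorphism of R with s ∘ s = id, let R^s := { r ∈ R : s(r) = r } be the fixed subring, and suppose δ ∈ R is such that (1, δ) is a basis of R as a module over R^s. Let B := R ⊗_{R^s} R, with (R,R)-bimodule structure r · (a ⊗ b) · r' = (r a) ⊗ (b r'). Then: the map ν : R → B, r ↦ r ⊗ δ − r·s(δ) ⊗ 1, is injective and satisfies ν(r a r') = r · ν(a) · r' for all r, a, r' ∈ R; the map π : B → R determined by a ⊗ b ↦ a·s(b) is well defined, additive and surjective, and satisfies π(r · u · r') = r · π(u) · s(r') for all r, r' ∈ R and u ∈ B; and the kernel of π equals the image of ν. Consequently there is a short exact sequence of (R,R)-bimodules 0 → Δ_e → B → Δ_s → 0, where Δ_e denotes R with the standard bimodule structure and Δ_s denotes R with the bimodule structure r · m · r' = r m s(r'). -/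
open TensorProduct

/-- The map `ν : R → R ⊗_{R^s} R`, `r ↦ r ⊗ δ − (r · s(δ)) ⊗ 1`. -/
noncomputable def nuMap {R : Type*} [CommRing R] (s : R ≃+* R) (δ : R) (r : R) :
    R ⊗[fixedSubring s] R :=
  r ⊗ₜ[fixedSubring s] δ - (r * s δ) ⊗ₜ[fixedSubring s] (1 : R)

set_option maxHeartbeats 1000000 in
/-- Lemma 2.4 of Bezrukavnikov–Riche, "Hecke action on the principal block", second exact
sequence (`Δ_e ↪ R ⊗_{R^s} R ↠ Δ_s`): if `s` is a ring involution of `R` and `(1, δ)` is a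
basis of `R` over the fixed subring `R^s`, then the map `ν : r ↦ r ⊗ δ − (r · s δ) ⊗ 1` is
injective and satisfies `ν(r a r') = r · ν(a) · r'`; the map `π` determined by
`a ⊗ b ↦ a · s(b)` is a well-defined surjective additive map satisfying
`π(r · u · r') = r · π(u) · s(r')`; and the kernel of `π` is exactly the image of `ν`. -/
theorem stmt_7 {R : Type*} [CommRing R] (s : R ≃+* R) (hinv : ∀ r : R, s (s r) = r)
    (δ : R)
    (hbasis : ∀ r : R, ∃! p : (fixedSubring s) × (fixedSubring s),
      r = (p.1 : R) + (p.2 : R) * δ) :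
    Function.Injective (nuMap s δ) ∧
    (∀ r a r' : R,
      nuMap s δ (r * a * r') =
        actLeft (fixedSubring s) r (actRight (fixedSubring s) r' (nuMap s δ a))) ∧
    ∃ π : (R ⊗[fixedSubring s] R) →+ R,
      (∀ a b : R, π (a ⊗ₜ[fixedSubring s] b) = a * s b) ∧
      Function.Surjective π ∧
      (∀ (r r' : R) (u : R ⊗[fixedSubring s] R),
        π (actLeft (fixedSubring s) r (actRight (fixedSubring s) r' u)) = r * π u * s r') ∧
      (∀ u : R ⊗[fixedSubring s] R, π u = 0 ↔ ∃ r : R, u = nuMap s δ r) := by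
  classical
  set S := fixedSubring s with hS
  have hfix : ∀ x : S, s (x : R) = (x : R) := fun x => x.2
  have smul_def : ∀ (t : S) (r : R), t • r = (t : R) * r := fun t r => rfl
  choose c hc hu using hbasis
  have hcone : c 1 = (1, 0) := (hu 1 (1, 0) (by push_cast; ring)).symm
  have hcdelta : c δ = (0, 1) := (hu δ (0, 1) (by push_cast; ring)).symm
  have hσmem : δ + s δ ∈ S := by
    show s (δ + s δ) = δ + s δ
    rw [map_add, hinv]; ring
  have hρmem : δ * s δ ∈ S := by
    show s (δ * s δ) = δ * s δ
    rw [map_mul, hinv]; ring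
  set σ : S := ⟨δ + s δ, hσmem⟩ with hσdef
  set ρ : S := ⟨δ * s δ, hρmem⟩ with hρdef
  have hσc : (σ : R) = δ + s δ := rfl
  have hρc : (ρ : R) = δ * s δ := rfl
  have hcdel : ∀ r : R, c (δ * r) = (-(c r).2 * ρ, (c r).1 + (c r).2 * σ) := by
    intro r
    refine (hu _ _ ?_).symm
    push_cast [hσc, hρc]
    linear_combination δ * hc r
  have hcadd : ∀ x y : R, c (x + y) = c x + c y := by
    intro x y
    refine (hu _ _ ?_).symm
    dsimp only
    rw [Prod.fst_add, Prod.snd_add]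
    push_cast
    linear_combination hc x + hc y
  have hcsmul : ∀ (t : S) (x : R), c (t • x) = t • c x := by
    intro t x
    refine (hu _ _ ?_).symm
    simp only [Prod.smul_fst, Prod.smul_snd, smul_eq_mul]
    rw [smul_def]
    push_cast
    linear_combination (t : R) * hc x
  have hc1smul : ∀ (t : S) (x : R), ((c ((t : R) * x)).1 : R) = (t : R) * ((c x).1 : R) := by
    intro t x
    rw [← smul_def, hcsmul]
    simp [smul_eq_mul]
  have hc2smul : ∀ (t : S) (x : R), ((c ((t : R) * x)).2 : R) = (t : R) * ((c x).2 : R) := by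
    intro t x
    rw [← smul_def, hcsmul]
    simp [smul_eq_mul]
  -- the three linear maps on the tensor product
  let p : R ⊗[S] R →ₗ[S] R := TensorProduct.lift (LinearMap.mk₂ S
    (fun a b => a * ((c b).1 : R))
    (fun a a' b => by ring)
    (fun t a b => by rw [smul_def, smul_def]; ring)
    (fun a b b' => by rw [hcadd, Prod.fst_add]; push_cast; ring)
    (fun t a b => by rw [smul_def, smul_def, hc1smul]; ring))
  let q : R ⊗[S] R →ₗ[S] R := TensorProduct.lift (LinearMap.mk₂ S
    (fun a b => a * ((c b).2 : R))
    (fun a a' b => by ring)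
    (fun t a b => by rw [smul_def, smul_def]; ring)
    (fun a b b' => by rw [hcadd, Prod.snd_add]; push_cast; ring)
    (fun t a b => by rw [smul_def, smul_def, hc2smul]; ring))
  let πl : R ⊗[S] R →ₗ[S] R := TensorProduct.lift (LinearMap.mk₂ S
    (fun a b => a * s b)
    (fun a a' b => by ring)
    (fun t a b => by rw [smul_def, smul_def]; ring)
    (fun a b b' => by rw [map_add]; ring)
    (fun t a b => by rw [smul_def, smul_def, map_mul, hfix]; ring))
  have hp : ∀ a b : R, p (a ⊗ₜ[S] b) = a * ((c b).1 : R) := fun a b => rfl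
  have hq : ∀ a b : R, q (a ⊗ₜ[S] b) = a * ((c b).2 : R) := fun a b => rfl
  have hπ : ∀ a b : R, πl (a ⊗ₜ[S] b) = a * s b := fun a b => rfl
  have hdecomp : ∀ u : R ⊗[S] R, u = (p u) ⊗ₜ[S] (1 : R) + (q u) ⊗ₜ[S] δ := by
    intro u
    induction u using TensorProduct.induction_on with
    | zero => simp
    | tmul a b =>
      rw [hp, hq, mul_comm a ((c b).1 : R), mul_comm a ((c b).2 : R),
        ← smul_def, ← smul_def, smul_tmul, smul_tmul, ← tmul_add,
        smul_def, smul_def, mul_one]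
      rw [← hc b]
    | add x y hx hy =>
      rw [map_add, map_add, add_tmul, add_tmul]
      conv_lhs => rw [hx, hy]
      abel
  have hext : ∀ u v : R ⊗[S] R, p u = p v → q u = q v → u = v := by
    intro u v h1 h2
    rw [hdecomp u, hdecomp v, h1, h2]
  have hqν : ∀ r : R, q (nuMap s δ r) = r := by
    intro r
    rw [nuMap, map_sub, hq, hq, hcdelta, hcone]
    push_cast; ring
  have hpν : ∀ r : R, p (nuMap s δ r) = -(r * s δ) := by
    intro r
    rw [nuMap, map_sub, hp, hp, hcdelta, hcone]
    push_cast; ring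
  have hinj : Function.Injective (nuMap s δ) := by
    intro x y h
    have := congrArg q h
    rwa [hqν, hqν] at this
  have hact : ∀ (r r' a b : R),
      actLeft S r (actRight S r' (a ⊗ₜ[S] b)) = (r * a) ⊗ₜ[S] (b * r') := by
    intro r r' a b
    simp [actLeft, actRight, LinearMap.rTensor_tmul, LinearMap.lTensor_tmul,
      LinearMap.mulLeft_apply, LinearMap.mulRight_apply]
  have hbimod : ∀ r a r' : R,
      nuMap s δ (r * a * r') = actLeft S r (actRight S r' (nuMap s δ a)) := by
    intro r a r'
    have hR : actLeft S r (actRight S r' (nuMap s δ a))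
        = (r * a) ⊗ₜ[S] (δ * r') - (r * (a * s δ)) ⊗ₜ[S] r' := by
      rw [nuMap, map_sub, map_sub, hact, hact, one_mul]
    rw [hR]
    refine hext _ _ ?_ ?_
    · rw [nuMap, map_sub, map_sub, hp, hp, hp, hp, hcdelta, hcone, hcdel r']
      push_cast [hσc, hρc]
      linear_combination (-(r * a * s δ)) * hc r'
    · rw [nuMap, map_sub, map_sub, hq, hq, hq, hq, hcdelta, hcone, hcdel r']
      push_cast [hσc, hρc]
      linear_combination (r * a) * hc r'
  refine ⟨hinj, hbimod, πl.toAddMonoidHom, fun a b => rfl, ?_, ?_, ?_⟩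
  · intro r
    refine ⟨r ⊗ₜ[S] 1, ?_⟩
    show πl (r ⊗ₜ[S] 1) = r
    rw [hπ, map_one, mul_one]
  · intro r r' u
    show πl (actLeft S r (actRight S r' u)) = r * πl u * s r'
    induction u using TensorProduct.induction_on with
    | zero => simp
    | tmul a b =>
      rw [hact, hπ, hπ, map_mul]
      ring
    | add x y hx hy =>
      rw [map_add, map_add, map_add, map_add, hx, hy]
      ring
  · intro u
    constructor
    · intro h0
      have h0' : πl u = 0 := h0
      refine ⟨q u, ?_⟩
      refine hext _ _ ?_ (by rw [hqν])
      rw [hpν]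
      have hid := congrArg πl (hdecomp u)
      rw [map_add, hπ, hπ, map_one, mul_one, h0'] at hid
      linear_combination -hid
    · rintro ⟨r, rfl⟩
      show πl (nuMap s δ r) = 0
      rw [nuMap, map_sub, hπ, hπ, map_one, mul_one]
      ring
end
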